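/- Let Q1,...,Qn be probability measures on (Ω, F) and ψ: [0,1]^n → [0,1] with ψ(0)=0, ψ(1)=1. If ψ is componentwise increasing, then the set function A ↦ ψ(Q1(A),...,Qn(A)) is monotone (increasing under set inclusion). If moreover ψ is componentwise concave and submodular, then this set function is submodular: c(A∪B) + c(A∩B) ≤ c(A) + c(B) for all A, B ∈ F. -/

import Mathlib

open MeasureTheory Set

/-- The unit cube `[0,1]^n`. -/
def unitCube (n : ℕ) : Set (Fin n → ℝ) := {x | ∀ i, x i ∈ Set.Icc (0 : ℝ) 1}

lemma concave_two_point {f : ℝ → ℝ} {s : Set ℝ} (hf : ConcaveOn ℝ s f)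
    {a b c d : ℝ} (ha : a ∈ s) (hd : d ∈ s)
    (hab : a ≤ b) (hbc : b ≤ c) (hcd : c ≤ d) (hsum : b + c = a + d) :
    f a + f d ≤ f b + f c := by
  rcases eq_or_lt_of_le (hab.trans (hbc.trans hcd)) with h | h
  · have hb : b = a := le_antisymm (by linarith) hab
    have hc : c = d := by linarith
    rw [hb, hc]
  · set t := (d - b) / (d - a) with ht
    have hda : 0 < d - a := by linarith
    have ht0 : 0 ≤ t := div_nonneg (by linarith) hda.le
    have ht1 : t ≤ 1 := by rw [div_le_one hda]; linarith
    have hb' : t * a + (1 - t) * d = b := by field_simp [ht]; have := div_mul_cancel₀ (d - b) hda.ne'; rw [← ht] at this; linear_combination -this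
    have hc' : (1 - t) * a + t * d = c := by field_simp [ht]; nlinarith [hb']
    have h1 := hf.2 ha hd ht0 (by linarith : (0:ℝ) ≤ 1 - t) (by ring)
    have h2 := hf.2 ha hd (by linarith : (0:ℝ) ≤ 1 - t) ht0 (by ring)
    simp only [smul_eq_mul] at h1 h2
    rw [hb'] at h1
    rw [hc'] at h2
    nlinarith [h1, h2]

lemma cube_update {n : ℕ} {x : Fin n → ℝ} (hx : x ∈ unitCube n) {i : Fin n} {t : ℝ}
    (ht : t ∈ Set.Icc (0:ℝ) 1) : Function.update x i t ∈ unitCube n := by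
  intro j
  rcases eq_or_ne j i with rfl | hne
  · simpa using ht
  · simpa [Function.update_of_ne hne] using hx j

lemma step_lemma {n : ℕ} (ψ : (Fin n → ℝ) → ℝ)
    (hconc : ∀ x ∈ unitCube n, ∀ i : Fin n,
        ConcaveOn ℝ (Set.Icc (0 : ℝ) 1) (fun t : ℝ => ψ (Function.update x i t)))
    (hsub : ∀ u ∈ unitCube n, ∀ v ∈ unitCube n, ψ (u ⊔ v) + ψ (u ⊓ v) ≤ ψ u + ψ v)
    {Z W : Fin n → ℝ} (hZ : Z ∈ unitCube n) (hW : W ∈ unitCube n)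
    (hWZ : W ≤ Z) (i : Fin n) {a d : ℝ} (ha0 : 0 ≤ a) (hd1 : d ≤ 1)
    (haW : a ≤ W i) (hZd : Z i ≤ d) (hsum : W i + Z i = a + d) :
    ψ (Function.update Z i d) + ψ (Function.update W i a) ≤ ψ Z + ψ W := by
  have hai : a ∈ Set.Icc (0:ℝ) 1 := ⟨ha0, haW.trans ((hW i).2)⟩
  have hdi : d ∈ Set.Icc (0:ℝ) 1 := ⟨(hZ i).1.trans hZd, hd1⟩
  -- submodularity: sup of Z and (update W i d) is update Z i d, inf is update W i (Z i)
  have hsubm := hsub Z hZ (Function.update W i d) (cube_update hW hdi)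
  have hsup : Z ⊔ Function.update W i d = Function.update Z i d := by
    funext j
    rcases eq_or_ne j i with rfl | hne
    · simp [max_eq_right hZd]
    · simp [Function.update_of_ne hne, max_eq_left (hWZ j)]
  have hinf : Z ⊓ Function.update W i d = Function.update W i (Z i) := by
    funext j
    rcases eq_or_ne j i with rfl | hne
    · simp [min_eq_left hZd]
    · simp [Function.update_of_ne hne, min_eq_right (hWZ j)]
  rw [hsup, hinf] at hsubm
  -- concavity along coordinate i at W
  have hcv := hconc W hW i
  have h2 : ψ (Function.update W i a) + ψ (Function.update W i d)
      ≤ ψ (Function.update W i (W i)) + ψ (Function.update W i (Z i)) :=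
    concave_two_point hcv hai hdi haW (hWZ i) hZd hsum
  rw [Function.update_eq_self] at h2
  linarith

lemma key_lemma {n : ℕ} (ψ : (Fin n → ℝ) → ℝ)
    (hconc : ∀ x ∈ unitCube n, ∀ i : Fin n,
        ConcaveOn ℝ (Set.Icc (0 : ℝ) 1) (fun t : ℝ => ψ (Function.update x i t)))
    (hsub : ∀ u ∈ unitCube n, ∀ v ∈ unitCube n, ψ (u ⊔ v) + ψ (u ⊓ v) ≤ ψ u + ψ v)
    {w x y z : Fin n → ℝ} (hz : z ∈ unitCube n) (hw : w ∈ unitCube n)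
    (hx : x ∈ unitCube n) (hy : y ∈ unitCube n)
    (hwy : w ≤ y) (hyx : y ≤ x) (hxz : x ≤ z)
    (hsum : ∀ j, x j + y j = z j + w j) :
    ψ z + ψ w ≤ ψ x + ψ y := by
  -- interpolate coordinate by coordinate
  have main : ∀ S : Finset (Fin n),
      ψ (fun j => if j ∈ S then z j else x j) + ψ (fun j => if j ∈ S then w j else y j)
        ≤ ψ x + ψ y := by
    intro S
    induction S using Finset.induction_on with
    | empty => simp
    | @insert i S hiS ih =>
      set Z : Fin n → ℝ := fun j => if j ∈ S then z j else x j with hZdef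
      set W : Fin n → ℝ := fun j => if j ∈ S then w j else y j with hWdef
      have hZc : Z ∈ unitCube n := by
        intro j; by_cases h : j ∈ S <;> simp [hZdef, h, hz j, hx j]
      have hWc : W ∈ unitCube n := by
        intro j; by_cases h : j ∈ S <;> simp [hWdef, h, hw j, hy j]
      have hWZ : W ≤ Z := by
        intro j; by_cases h : j ∈ S <;>
          simp [hZdef, hWdef, h, (hwy j).trans ((hyx j).trans (hxz j)), (hwy j).trans (hyx j),
            (hyx j)]
      have hZi : Z i = x i := by simp [hZdef, hiS]
      have hWi : W i = y i := by simp [hWdef, hiS]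
      have hZ' : (fun j => if j ∈ insert i S then z j else x j) = Function.update Z i (z i) := by
        funext j
        rcases eq_or_ne j i with rfl | hne
        · simp
        · simp [Function.update_of_ne hne, hZdef, hne]
      have hW' : (fun j => if j ∈ insert i S then w j else y j) = Function.update W i (w i) := by
        funext j
        rcases eq_or_ne j i with rfl | hne
        · simp
        · simp [Function.update_of_ne hne, hWdef, hne]
      rw [hZ', hW']
      have hstep := step_lemma ψ hconc hsub hZc hWc hWZ i (hw i).1 (hz i).2
        (by rw [hWi]; exact hwy i) (by rw [hZi]; exact hxz i)
        (by rw [hWi, hZi]; linarith [hsum i])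
      linarith
  have := main Finset.univ
  simpa using this

theorem distorted_set_function_monotone_and_submodular {Ω : Type*} [MeasurableSpace Ω]
    (n : ℕ) (Q : Fin n → Measure Ω) (hprob : ∀ i, IsProbabilityMeasure (Q i))
    (ψ : (Fin n → ℝ) → ℝ)
    (hψ0 : ψ (fun _ => 0) = 0) (hψ1 : ψ (fun _ => 1) = 1)
    (hψrange : ∀ x ∈ unitCube n, ψ x ∈ Set.Icc (0 : ℝ) 1)
    (hinc : ∀ x ∈ unitCube n, ∀ y ∈ unitCube n, x ≤ y → ψ x ≤ ψ y) :
    (∀ A B : Set Ω, MeasurableSet A → MeasurableSet B → A ⊆ B →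
        ψ (fun i => (Q i A).toReal) ≤ ψ (fun i => (Q i B).toReal)) ∧
    ((∀ x ∈ unitCube n, ∀ i : Fin n,
        ConcaveOn ℝ (Set.Icc (0 : ℝ) 1) (fun t : ℝ => ψ (Function.update x i t))) →
     (∀ u ∈ unitCube n, ∀ v ∈ unitCube n, ψ (u ⊔ v) + ψ (u ⊓ v) ≤ ψ u + ψ v) →
     (∀ A B : Set Ω, MeasurableSet A → MeasurableSet B →
        ψ (fun i => (Q i (A ∪ B)).toReal) + ψ (fun i => (Q i (A ∩ B)).toReal)
          ≤ ψ (fun i => (Q i A).toReal) + ψ (fun i => (Q i B).toReal))) := by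
  have hfin : ∀ i (A : Set Ω), Q i A ≠ ⊤ := fun i A =>
    (measure_lt_top (Q i) A).ne
  have hcube : ∀ A : Set Ω, (fun i => (Q i A).toReal) ∈ unitCube n := by
    intro A i
    constructor
    · exact ENNReal.toReal_nonneg
    · have h := prob_le_one (μ := Q i) (s := A)
      have h2 := ENNReal.toReal_mono (show (1 : ENNReal) ≠ ⊤ by simp) h
      simpa using h2
  have hmono : ∀ (A B : Set Ω), A ⊆ B →
      (fun i => (Q i A).toReal) ≤ (fun i => (Q i B).toReal) := by
    intro A B hAB i
    exact ENNReal.toReal_mono (hfin i B) (measure_mono hAB)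
  constructor
  · intro A B _ _ hAB
    exact hinc _ (hcube A) _ (hcube B) (hmono A B hAB)
  · intro hconc hsub A B hA hB
    set a : Fin n → ℝ := fun i => (Q i A).toReal with hadef
    set b : Fin n → ℝ := fun i => (Q i B).toReal with hbdef
    set z : Fin n → ℝ := fun i => (Q i (A ∪ B)).toReal with hzdef
    set w : Fin n → ℝ := fun i => (Q i (A ∩ B)).toReal with hwdef
    have hsum : ∀ j, (a ⊔ b) j + (a ⊓ b) j = z j + w j := by
      intro j
      have h1 : Q j (A ∪ B) + Q j (A ∩ B) = Q j A + Q j B :=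
        measure_union_add_inter A hB
      have h2 : z j + w j = a j + b j := by
        simp only [hzdef, hwdef, hadef, hbdef]
        rw [← ENNReal.toReal_add (hfin j _) (hfin j _), ← ENNReal.toReal_add (hfin j _) (hfin j _), h1]
      have : (a ⊔ b) j + (a ⊓ b) j = a j + b j := max_add_min (a j) (b j)
      linarith
    have hkey : ψ z + ψ w ≤ ψ (a ⊔ b) + ψ (a ⊓ b) := by
      apply key_lemma ψ hconc hsub (hcube _) (hcube _)
      · intro j
        exact ⟨le_max_of_le_left ((hcube A) j).1, max_le ((hcube A) j).2 ((hcube B) j).2⟩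
      · intro j
        exact ⟨le_min ((hcube A) j).1 ((hcube B) j).1, min_le_of_left_le ((hcube A) j).2⟩
      · intro j
        exact le_min (hmono _ _ Set.inter_subset_left j) (hmono _ _ Set.inter_subset_right j)
      · intro j
        exact min_le_of_left_le (le_max_left _ _)
      · intro j
        exact max_le (hmono _ _ Set.subset_union_left j) (hmono _ _ Set.subset_union_right j)
      · exact hsum
    have := hsub a (hcube A) b (hcube B)
    linarith
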